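/- Let φ : A → B be a morphism of ℚ-vector spaces (ℚ-modules). If both the kernel and cokernel of φ are finitely generated as ℤ-modules, then φ is an isomorphism. -/

import Mathlib

lemma qmod_zfinite_subsingleton {M : Type*} [AddCommGroup M] [Module ℚ M]
    (hM : Module.Finite ℤ M) : Subsingleton M := by
  haveI : NoZeroSMulDivisors ℤ M := by
    constructor
    intro n x h
    rcases eq_or_ne n 0 with hn | hn
    · exact Or.inl hn
    · right
      have h' : ((n : ℚ)) • x = 0 := by rwa [Int.cast_smul_eq_zsmul]
      have : (n : ℚ) ≠ 0 := by exact_mod_cast hn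
      exact (smul_eq_zero.mp h').resolve_left this
  haveI : Module.Free ℤ M := Module.free_of_finite_type_torsion_free'
  set ι := Module.Free.ChooseBasisIndex ℤ M
  let b : Module.Basis ι ℤ M := Module.Free.chooseBasis ℤ M
  rcases isEmpty_or_nonempty ι with hι | hι
  · exact b.repr.toEquiv.subsingleton
  · exfalso
    obtain ⟨i⟩ := hι
    have hx : b i = (2 : ℤ) • ((2 : ℚ)⁻¹ • b i) := by
      have := (Int.cast_smul_eq_zsmul ℚ (2 : ℤ) ((2 : ℚ)⁻¹ • b i)).symm
      rw [this, smul_smul]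
      norm_num
    have h1 : b.coord i (b i) = 1 := by simp
    have h2 : b.coord i (b i) = 2 * b.coord i ((2 : ℚ)⁻¹ • b i) := by
      conv_lhs => rw [hx]
      rw [map_zsmul, smul_eq_mul]
    omega

/-- A morphism of ℚ-modules whose kernel and cokernel are finitely generated
as ℤ-modules is an isomorphism. -/
theorem stmt_0 {A B : Type*} [AddCommGroup A] [Module ℚ A] [AddCommGroup B] [Module ℚ B]
    (φ : A →ₗ[ℚ] B)
    (hker : Module.Finite ℤ (LinearMap.ker φ))
    (hcoker : Module.Finite ℤ (B ⧸ LinearMap.range φ)) :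
    Function.Bijective φ := by
  haveI h1 : Subsingleton (LinearMap.ker φ) := qmod_zfinite_subsingleton hker
  haveI h2 : Subsingleton (B ⧸ LinearMap.range φ) := qmod_zfinite_subsingleton hcoker
  constructor
  · rw [← LinearMap.ker_eq_bot]
    exact Submodule.eq_bot_of_subsingleton
  · rw [← LinearMap.range_eq_top, ← Submodule.Quotient.subsingleton_iff]
    exact h2
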